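/- In the field ℚ(q), for all nonnegative integers n, i, k: [n+i,i]·[n+k,k] = Σ_{j=0}^{i+k} (-1)^{i+j+k}·q^{(k+i-j)(2n+k+i-j+1)/2}·Mq(j;i,k)·[n+j,j], where for each j in the range max(i,k) ≤ j ≤ i+k the exponent (k+i-j)(2n+k+i-j+1)/2 is a nonnegative integer. -/

import Mathlib

/-- The $q$-factorial `(q)_n = (1-q)(1-q²)⋯(1-qⁿ)` in `ℚ(q) = RatFunc ℚ`. -/
noncomputable def qfac (n : ℕ) : RatFunc ℚ :=
  ∏ m ∈ Finset.range n, (1 - (RatFunc.X : RatFunc ℚ) ^ (m + 1))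

/-- The Gaussian binomial coefficient `[n, k]` in `ℚ(q)`. -/
noncomputable def qbinom (n k : ℕ) : RatFunc ℚ :=
  if k ≤ n then qfac n / (qfac k * qfac (n - k)) else 0

/-- The $q$-multinomial coefficient `Mq(j; i, k)` in `ℚ(q)`: it equals
`(q)_j/((q)_{j-i}(q)_{j-k}(q)_{i+k-j})` when `max i k ≤ j ≤ i + k`, and `0`
otherwise. -/
noncomputable def qmulti (j i k : ℕ) : RatFunc ℚ :=
  if i ≤ j ∧ k ≤ j ∧ j ≤ i + k then
    qfac j / (qfac (j - i) * qfac (j - k) * qfac (i + k - j))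
  else 0

local notation "X" => (RatFunc.X : RatFunc ℚ)

lemma one_sub_X_pow_ne_zero (m : ℕ) (hm : m ≠ 0) : (1 : RatFunc ℚ) - X ^ m ≠ 0 := by
  rw [sub_ne_zero]
  intro h
  have h2 : (1 : Polynomial ℚ) = Polynomial.X ^ m := by
    apply RatFunc.algebraMap_injective ℚ
    simpa [map_pow, RatFunc.algebraMap_X] using h
  have := congrArg (fun p => Polynomial.coeff p 0) h2
  simp [Polynomial.coeff_X_pow, Ne.symm hm] at this

lemma qfac_ne_zero (n : ℕ) : qfac n ≠ 0 := by
  unfold qfac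
  apply Finset.prod_ne_zero_iff.mpr
  intro m _
  exact one_sub_X_pow_ne_zero (m+1) (Nat.succ_ne_zero m)

lemma qfac_succ (n : ℕ) : qfac (n+1) = qfac n * (1 - X ^ (n+1)) := Finset.prod_range_succ _ _

lemma qfac_zero : qfac 0 = 1 := rfl

lemma qbinom_of_le {n k : ℕ} (h : k ≤ n) : qbinom n k = qfac n / (qfac k * qfac (n-k)) := if_pos h
lemma qbinom_of_lt {n k : ℕ} (h : n < k) : qbinom n k = 0 := if_neg (by omega)
lemma qbinom_zero_right (n : ℕ) : qbinom n 0 = 1 := by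
  rw [qbinom_of_le (Nat.zero_le n), qfac_zero, Nat.sub_zero, one_mul,
    div_self (qfac_ne_zero n)]

lemma qbinom_self (n : ℕ) : qbinom n n = 1 := by
  rw [qbinom_of_le le_rfl, Nat.sub_self, qfac_zero, mul_one, div_self (qfac_ne_zero n)]

lemma qfac_eq {a : ℕ} (h : 1 ≤ a) : qfac a = qfac (a-1) * (1 - X ^ a) := by
  obtain ⟨b, rfl⟩ : ∃ b, a = b + 1 := ⟨a-1, by omega⟩
  simpa using qfac_succ b

lemma pascal (k m : ℕ) : qbinom (k+1) (m+1) = qbinom k (m+1) + X ^ (k-m) * qbinom k m := by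
  rcases lt_trichotomy m k with h | rfl | h
  · rw [qbinom_of_le (by omega : m+1 ≤ k+1), qbinom_of_le (by omega : m+1 ≤ k),
      qbinom_of_le (by omega : m ≤ k)]
    have e1 : k + 1 - (m+1) = k - m := by omega
    have e2 : qfac (k+1) = qfac k * (1 - X^(k+1)) := qfac_succ k
    have e3 : qfac (k-m) = qfac (k-(m+1)) * (1 - X^(k-m)) := by
      rw [show k-(m+1) = k-m-1 by omega]; exact qfac_eq (by omega)
    have e4 : qfac (m+1) = qfac m * (1 - X^(m+1)) := qfac_succ m
    have hp : X ^ (k-m) * X ^ (m+1) = X ^ (k+1) := by rw [← pow_add]; congr 1; omega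
    rw [e1, e2, e3, e4]
    have n1 := qfac_ne_zero k
    have n2 := qfac_ne_zero m
    have n3 := qfac_ne_zero (k-(m+1))
    have n4 := one_sub_X_pow_ne_zero (k+1) (by omega)
    have n5 := one_sub_X_pow_ne_zero (k-m) (by omega)
    have n6 := one_sub_X_pow_ne_zero (m+1) (by omega)
    have hp2 : X ^ (k-m) * X ^ m = X ^ k := by rw [← pow_add]; congr 1; omega
    rw [← hp]
    field_simp
    ring
  · rw [qbinom_self, qbinom_of_lt (by omega), qbinom_self, Nat.sub_self, pow_zero]
    ring
  · rw [qbinom_of_lt (by omega), qbinom_of_lt (by omega), qbinom_of_lt (by omega)]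
    ring

lemma absorb1 (i m : ℕ) : qbinom i m * (1 - X ^ (i-m)) = (1 - X ^ i) * qbinom (i-1) m := by
  rcases lt_trichotomy m i with h | rfl | h
  · rw [qbinom_of_le (by omega : m ≤ i), qbinom_of_le (by omega : m ≤ i-1)]
    have e2 : qfac i = qfac (i-1) * (1 - X^i) := qfac_eq (by omega)
    have e3 : qfac (i-m) = qfac (i-1-m) * (1 - X^(i-m)) := by
      rw [show i-1-m = (i-m)-1 by omega]; exact qfac_eq (by omega)
    have n1 := qfac_ne_zero m
    have n2 := qfac_ne_zero (i-1-m)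
    have n5 := one_sub_X_pow_ne_zero (i-m) (by omega)
    rw [e2, e3]
    field_simp
  · rcases Nat.eq_zero_or_pos m with rfl | hm
    · simp
    · rw [Nat.sub_self, pow_zero, sub_self, mul_zero,
        qbinom_of_lt (by omega : m - 1 < m), mul_zero]
  · rw [qbinom_of_lt h, qbinom_of_lt (by omega : i - 1 < m), zero_mul, mul_zero]

lemma absorb2 (i m : ℕ) : qbinom i (m+1) * qfac (m+1) = (1 - X ^ i) * qbinom (i-1) m * qfac m := by
  rcases le_or_gt (m+1) i with h | h
  · rw [qbinom_of_le h, qbinom_of_le (by omega : m ≤ i-1)]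
    have e2 : qfac i = qfac (i-1) * (1 - X^i) := qfac_eq (by omega)
    have e4 : qfac (m+1) = qfac m * (1 - X^(m+1)) := qfac_succ m
    have e5 : i - (m+1) = i - 1 - m := by omega
    have n1 := qfac_ne_zero m
    have n2 := qfac_ne_zero (i-1-m)
    have n3 := qfac_ne_zero (i-1)
    have n6 := one_sub_X_pow_ne_zero (m+1) (by omega)
    rw [e2, e4, e5]
    field_simp
  · rcases Nat.eq_zero_or_pos i with rfl | hi
    · simp [qbinom_of_lt (by omega : 0 < m+1)]
    · rw [qbinom_of_lt h, qbinom_of_lt (by omega : i - 1 < m)]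
      ring

def E : ℕ → ℕ → ℕ
  | _, 0 => 0
  | n, (m+1) => E n m + (n+m+1)

lemma E_eq (n m : ℕ) : m * (2*n+m+1) / 2 = E n m := by
  induction m with
  | zero => simp [E]
  | succ m ih =>
    rw [E, ← ih]
    obtain ⟨t, ht⟩ : 2 ∣ m * (2*n+m+1) := by
      rcases Nat.even_or_odd m with he | ho
      · exact Dvd.dvd.mul_right he.two_dvd _
      · obtain ⟨s, hs⟩ := ho
        exact Dvd.dvd.mul_left ⟨n+s+1, by omega⟩ m
    have h2 : (m+1) * (2*n+(m+1)+1) = m*(2*n+m+1) + 2*(n+m+1) := by ring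
    rw [h2, ht]
    omega

noncomputable def T (n i k m : ℕ) : RatFunc ℚ :=
  (-1)^m * X^(E n m) * qbinom i m * qbinom k m * qfac m * qfac n * qfac (n+i+k-m)

noncomputable def U (n i k m : ℕ) : RatFunc ℚ :=
  (-1)^m * X^(E n m + (n+k+1)) * (1 - X^i) * qbinom (i-1) m * qbinom k m *
    qfac m * qfac n * qfac (n+i+k-m)

lemma U_top (n i k : ℕ) : U n i k i = 0 := by
  rcases Nat.eq_zero_or_pos i with rfl | hi
  · simp [U]
  · rw [U, qbinom_of_lt (by omega : i - 1 < i)]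
    ring

lemma T_zero_step (n i k : ℕ) :
    T n i (k+1) 0 = (1 - X^(n+k+1)) * T n i k 0 + U n i k 0 := by
  rw [T, T, U]
  simp only [qbinom_zero_right, E, pow_zero, Nat.sub_zero, zero_add]
  have e1 : qfac (n+i+(k+1)) = qfac (n+i+k) * (1 - X^(n+i+k+1)) := by
    rw [show n+i+(k+1) = (n+i+k)+1 by omega]; exact qfac_succ _
  have e2 : X^(n+k+1) * X^i = X^(n+i+k+1) := by rw [← pow_add]; congr 1; omega
  rw [e1]
  linear_combination (qfac 0 * qfac n * qfac (n+i+k)) * e2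

lemma T_succ_step (n i k m : ℕ) (h : m + 1 ≤ i) :
    T n i (k+1) (m+1) = (1 - X^(n+k+1)) * T n i k (m+1) + U n i k (m+1) - U n i k m := by
  rcases le_or_gt m k with hmk | hmk
  swap
  · rw [T, T, U, U, qbinom_of_lt (by omega : k+1 < m+1), qbinom_of_lt (by omega : k < m+1),
      qbinom_of_lt hmk]
    ring
  have A1 := absorb1 i (m+1)
  have A2 := absorb2 i m
  have hp1 : X^(n+m+1) * X^(k-m) = X^(n+k+1) := by rw [← pow_add]; congr 1; omega
  have hp2 : X^(n+k+1) * X^(i-(m+1)) = X^(n+i+k-m) := by rw [← pow_add]; congr 1; omega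
  have e1 : qfac (n+i+k-m) = qfac (n+i+k-(m+1)) * (1 - X^(n+i+k-m)) := by
    rw [show n+i+k-(m+1) = (n+i+k-m)-1 by omega]; exact qfac_eq (by omega)
  have d1 : n+i+(k+1)-(m+1) = n+i+k-m := by omega
  rw [T, T, U, U, pascal k m, d1, e1]
  simp only [E, pow_add, pow_succ]
  linear_combination
    (-((-1)^m * X^(E n m) * X^(n+m+1) * qfac (m+1) * qfac n * qfac (n+i+k-(m+1)) *
        qbinom k (m+1) * X^(n+k+1))) * A1 +
    (-((-1)^m * X^(E n m) * X^(n+m+1) * qfac (m+1) * qfac n * qfac (n+i+k-(m+1)) *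
        qbinom k (m+1) * qbinom i (m+1))) * hp2 +
    (-((-1)^m * X^(E n m) * qfac n * qfac (n+i+k-(m+1)) * qbinom k m *
        (1 - X^(n+i+k-m)) * X^(n+k+1))) * A2 +
    (-((-1)^m * X^(E n m) * qfac n * qfac (n+i+k-(m+1)) * qbinom k m *
        (1 - X^(n+i+k-m)) * qbinom i (m+1) * qfac (m+1))) * hp1

lemma sum_T (n i : ℕ) : ∀ k, ∑ m ∈ Finset.range (i+1), T n i k m = qfac (n+i) * qfac (n+k) := by
  intro k
  induction k with
  | zero =>
    rw [Finset.sum_eq_single 0]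
    · show (-1)^0 * X^(E n 0) * qbinom i 0 * qbinom 0 0 * qfac 0 * qfac n * qfac (n+i+0-0) = _
      simp only [E, pow_zero, qbinom_zero_right, qfac_zero, Nat.add_zero, Nat.sub_zero]
      ring
    · intro m _ hm
      rw [T, qbinom_of_lt (by omega : 0 < m)]
      ring
    · intro hnot
      exact absurd (Finset.mem_range.mpr (by omega)) hnot
  | succ k ih =>
    have H : ∑ m ∈ Finset.range i, T n i (k+1) (m+1) =
        ∑ m ∈ Finset.range i, ((1 - X^(n+k+1)) * T n i k (m+1) + (U n i k (m+1) - U n i k m)) :=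
      Finset.sum_congr rfl (fun m hm => by
        rw [T_succ_step n i k m (by simpa using Finset.mem_range.mp hm)]; ring)
    rw [Finset.sum_range_succ', H, Finset.sum_add_distrib, Finset.sum_range_sub (U n i k),
      U_top, ← Finset.mul_sum, T_zero_step]
    have ih' := ih
    rw [Finset.sum_range_succ'] at ih'
    rw [show n+(k+1) = (n+k)+1 by omega, qfac_succ]
    linear_combination (1 - X^(n+k+1)) * ih'

lemma neg_one_pow_par {a b : ℕ} (h : a % 2 = b % 2) :
    ((-1 : RatFunc ℚ))^a = (-1)^b := by
  rcases Nat.even_or_odd a with ha | ha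
  · have h1 := Nat.even_iff.mp ha
    rw [ha.neg_one_pow, (Nat.even_iff.mpr (by omega) : Even b).neg_one_pow]
  · have h1 := Nat.odd_iff.mp ha
    rw [ha.neg_one_pow, (Nat.odd_iff.mpr (by omega) : Odd b).neg_one_pow]

lemma cf_eq_T (n i k m : ℕ) (hm : m ≤ i) :
    qfac i * qfac k * (qfac n * qfac n) *
      ((-1 : RatFunc ℚ)^(i+(i+k-m)+k) *
        X^((k+i-(i+k-m)) * (2*n+k+i-(i+k-m)+1)/2) *
        qmulti (i+k-m) i k * qbinom (n+(i+k-m)) (i+k-m)) = T n i k m := by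
  rcases le_or_gt m k with hk | hk
  · rw [show (k+i-(i+k-m)) = m by omega, show 2*n+k+i-(i+k-m)+1 = 2*n+m+1 by omega,
      E_eq n m, neg_one_pow_par (by omega : (i+(i+k-m)+k) % 2 = m % 2),
      qmulti, if_pos ⟨by omega, by omega, by omega⟩,
      show i+k-m-i = k-m by omega, show i+k-m-k = i-m by omega,
      show i+k-(i+k-m) = m by omega,
      qbinom_of_le (Nat.le_add_left _ _), Nat.add_sub_cancel,
      show n+(i+k-m) = n+i+k-m by omega,
      T, qbinom_of_le hm, qbinom_of_le hk]
    have n1 := qfac_ne_zero i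
    have n2 := qfac_ne_zero k
    have n3 := qfac_ne_zero n
    have n4 := qfac_ne_zero m
    have n5 := qfac_ne_zero (k-m)
    have n6 := qfac_ne_zero (i-m)
    have n7 := qfac_ne_zero (i+k-m)
    field_simp
  · rw [qmulti, if_neg (by omega), T, qbinom_of_lt hk]
    ring


/-- Result 3.3.  For `j ≤ i + k` the exponent `(k+i-j)(2n+k+i-j+1)/2` is a
nonnegative integer; we record the divisibility claim and use natural-number
arithmetic (in which the division is exact) in the identity. -/
theorem stmt_13 (n i k : ℕ) :
    (∀ j : ℕ, max i k ≤ j → j ≤ i + k →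
        2 ∣ (k + i - j) * (2 * n + k + i - j + 1)) ∧
      qbinom (n + i) i * qbinom (n + k) k =
        ∑ j ∈ Finset.range (i + k + 1),
          (-1 : RatFunc ℚ) ^ (i + j + k) *
            (RatFunc.X : RatFunc ℚ) ^ ((k + i - j) * (2 * n + k + i - j + 1) / 2) *
            qmulti j i k * qbinom (n + j) j := by

  constructor
  · intro j h1 h2
    rcases Nat.even_or_odd (k+i-j) with he | ho
    · exact Dvd.dvd.mul_right he.two_dvd _
    · obtain ⟨s, hs⟩ := ho
      exact Dvd.dvd.mul_left ⟨n+s+1, by omega⟩ _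
  · have n1 := qfac_ne_zero i
    have n2 := qfac_ne_zero k
    have n3 := qfac_ne_zero n
    have hc : qfac i * qfac k * (qfac n * qfac n) ≠ 0 := by
      exact mul_ne_zero (mul_ne_zero n1 n2) (mul_ne_zero n3 n3)
    apply mul_left_cancel₀ hc
    rw [Finset.mul_sum]
    rw [qbinom_of_le (Nat.le_add_left i n), qbinom_of_le (Nat.le_add_left k n),
      Nat.add_sub_cancel, Nat.add_sub_cancel]
    calc qfac i * qfac k * (qfac n * qfac n) *
          (qfac (n+i) / (qfac i * qfac n) * (qfac (n+k) / (qfac k * qfac n)))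
        = qfac (n+i) * qfac (n+k) := by field_simp
      _ = ∑ m ∈ Finset.range (i+1), T n i k m := (sum_T n i k).symm
      _ = _ := by
          conv_rhs => rw [← Finset.sum_range_reflect]
          simp only [Nat.add_sub_cancel]
          rw [← Finset.sum_subset (Finset.range_subset_range.mpr (by omega : i+1 ≤ i+k+1))
            (fun x hx hnx => ?_)]
          · exact Finset.sum_congr rfl (fun m hm =>
              (cf_eq_T n i k m (by have := Finset.mem_range.mp hm; omega)).symm)
          · have hxk := Finset.mem_range.mp hx
            have hxi : i < x := by
              by_contra hle
              exact hnx (Finset.mem_range.mpr (by omega))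
            rw [qmulti, if_neg (by omega)]
            ring
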